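/- Let V be a finite type and E : V → V → Prop a relation with no directed cycles (¬ Relation.TransGen E v v for every v). If E is reduced, then the transitive closure Relation.TransGen E (which is also a finite DAG on V) is reduced. -/

import Mathlib

/-- A directed path of length `k` in `(V, E)`: a map `p : Fin (k+1) → V` with
`E (p i) (p (i+1))` for all `i < k`. -/
def IsDirPath {V : Type*} (E : V → V → Prop) (k : ℕ) (p : Fin (k + 1) → V) : Prop :=
  ∀ i : Fin k, E (p i.castSucc) (p i.succ)

/-- A directed path of length `k` from `v` to `w`. -/
def IsDirPathFromTo {V : Type*} (E : V → V → Prop) (k : ℕ) (p : Fin (k + 1) → V)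
    (v w : V) : Prop :=
  p 0 = v ∧ p (Fin.last k) = w ∧ IsDirPath E k p

/-- `E` is reduced: for every pair of vertices `v, w` with `w` reachable from `v`, there is
a directed path from `v` to `w` whose vertex set contains the vertex set of every directed
path from `v` to `w`. -/
def Reduced {V : Type*} (E : V → V → Prop) : Prop :=
  ∀ v w : V, Relation.TransGen E v w →
    ∃ (m : ℕ) (γM : Fin (m + 1) → V), IsDirPathFromTo E m γM v w ∧
      ∀ (k : ℕ) (γ : Fin (k + 1) → V), IsDirPathFromTo E k γ v w →
        Set.range γ ⊆ Set.range γM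

private lemma chain_of_transGen {V : Type*} {E : V → V → Prop} {v w : V}
    (h : Relation.TransGen E v w) :
    ∃ l : List V, List.Chain E v l ∧ (v :: l).getLast? = some w := by
  obtain ⟨l, hc, hl⟩ := List.exists_isChain_cons_of_relationReflTransGen h.to_reflTransGen
  exact ⟨l, hc, by rw [List.getLast?_eq_getLast (List.cons_ne_nil _ _), hl]⟩

private lemma chain_append_lemma {V : Type*} {E : V → V → Prop} :
    ∀ (l1 : List V) (v u w : V) (l2 : List V), List.Chain E v l1 →
      (v :: l1).getLast? = some u → List.Chain E u l2 → (u :: l2).getLast? = some w →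
      List.Chain E v (l1 ++ l2) ∧ (v :: (l1 ++ l2)).getLast? = some w ∧
        (∀ x ∈ v :: l1, x ∈ v :: (l1 ++ l2)) ∧ (∀ x ∈ u :: l2, x ∈ v :: (l1 ++ l2))
  | [], v, u, w, l2, _, hu, h2, hw => by
      simp only [List.getLast?_singleton, Option.some.injEq] at hu
      subst hu
      exact ⟨h2, hw, by simp, by simp⟩
  | a :: t, v, u, w, l2, h1, hu, h2, hw => by
      change List.IsChain E (v :: a :: t) at h1
      rw [List.chain_cons] at h1
      rw [List.getLast?_cons_cons] at hu
      obtain ⟨c1, c2, c3, c4⟩ := chain_append_lemma t a u w l2 h1.2 hu h2 hw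
      refine ⟨List.chain_cons.mpr ⟨h1.1, c1⟩, ?_, ?_, ?_⟩
      · show (v :: a :: (t ++ l2)).getLast? = some w
        rw [List.getLast?_cons_cons]; exact c2
      · intro x hx
        rcases List.mem_cons.mp hx with h | h
        · simp [h]
        · exact List.mem_cons_of_mem _ (c3 x h)
      · intro x hx
        exact List.mem_cons_of_mem _ (c4 x hx)

/-- Convert a chain list into a `Fin`-indexed directed path covering the same vertices. -/
private lemma path_of_chain {V : Type*} {E : V → V → Prop} {v w : V} (l : List V)
    (hc : List.Chain E v l) (hw : (v :: l).getLast? = some w) :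
    ∃ (n : ℕ) (p : Fin (n + 1) → V), IsDirPathFromTo E n p v w ∧
      ∀ x ∈ v :: l, x ∈ Set.range p := by
  refine ⟨l.length, fun i => (v :: l).get (i.cast (by simp)), ⟨rfl, ?_, ?_⟩, ?_⟩
  · have hne : v :: l ≠ [] := by simp
    have := List.getLast?_eq_getLast hne
    rw [this, Option.some.injEq] at hw
    rw [← hw, List.getLast_eq_getElem]
    simp [Fin.last, List.get]
  · intro i
    have hc' : List.IsChain E (v :: l) := hc
    rw [List.isChain_iff_getElem] at hc'
    exact hc' i (by simpa using i.isLt)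
  · intro x hx
    obtain ⟨i, hi⟩ := List.mem_iff_get.mp hx
    exact ⟨i.cast (by simp), by simpa using hi⟩

/-- Any path over `TransGen E` from `v` to `w` is covered by an `E`-chain from `v` to `w`. -/
private lemma chain_of_transGen_path {V : Type*} {E : V → V → Prop} :
    ∀ (k : ℕ) (v w : V) (γ : Fin (k + 1) → V),
      IsDirPathFromTo (Relation.TransGen E) k γ v w →
      ∃ l : List V, List.Chain E v l ∧ (v :: l).getLast? = some w ∧
        ∀ x ∈ Set.range γ, x ∈ v :: l
  | 0, v, w, γ, ⟨h0, hl, _⟩ => by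
      refine ⟨[], List.Chain.nil, ?_, ?_⟩
      · simp only [List.getLast?_singleton, Option.some.injEq]
        rw [← h0, ← hl]; rfl
      · rintro x ⟨i, rfl⟩
        have : i = 0 := Fin.ext (by omega)
        simp [this, h0]
  | (k + 1), v, w, γ, ⟨h0, hl, hp⟩ => by
      set γ' : Fin (k + 1) → V := fun i => γ i.succ with hγ'
      have htail : IsDirPathFromTo (Relation.TransGen E) k γ' (γ 1) w := by
        refine ⟨rfl, ?_, ?_⟩
        · rw [← hl]; congr 1
        · intro i
          have := hp i.succ
          rwa [← Fin.succ_castSucc] at this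
      obtain ⟨l2, c2, w2, m2⟩ := chain_of_transGen_path k (γ 1) w γ' htail
      have hfirst : Relation.TransGen E v (γ 1) := by
        have := hp 0
        rwa [show (0 : Fin (k+1)).castSucc = 0 from rfl, h0] at this
      obtain ⟨l1, c1, u1⟩ := chain_of_transGen hfirst
      obtain ⟨d1, d2, d3, d4⟩ := chain_append_lemma l1 v (γ 1) w l2 c1 u1 c2 w2
      refine ⟨l1 ++ l2, d1, d2, ?_⟩
      rintro x ⟨i, rfl⟩
      rcases Fin.eq_zero_or_eq_succ i with h | ⟨j, rfl⟩
      · rw [h, h0]; exact List.mem_cons_self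
      · exact d4 _ (m2 _ ⟨j, rfl⟩)

theorem reduced_transClosure {V : Type*} [Fintype V] (E : V → V → Prop)
    (hacyc : ∀ v : V, ¬Relation.TransGen E v v)
    (hred : Reduced E) : Reduced (Relation.TransGen E) := by
  intro v w h
  have h' : Relation.TransGen E v w := by
    rwa [Relation.transGen_idem] at h
  obtain ⟨m, γM, hM, hmax⟩ := hred v w h'
  refine ⟨m, γM, ⟨hM.1, hM.2.1, fun i => Relation.TransGen.single (hM.2.2 i)⟩, ?_⟩
  intro k γ hγ
  obtain ⟨l, hc, hw, hmem⟩ := chain_of_transGen_path k v w γ hγ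
  obtain ⟨n, p, hp, hcov⟩ := path_of_chain l hc hw
  intro x hx
  exact hmax n p hp (hcov x (hmem x hx))
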